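/- Let θ ∈ (0, π/2) with m̃ = π/(4θ) − 1/2 not an integer, and let m̄ = ⌈m̃⌉. Define θ̄ = π/(4m̄+2). Then 0 < θ̄ ≤ θ and sin²((2m̄+1)θ̄) = 1. -/

import Mathlib

theorem derandomization_angle (θ : ℝ) (hθ0 : 0 < θ) (hθ1 : θ < Real.pi / 2)
    (mt : ℝ) (hmt : mt = Real.pi / (4 * θ) - 1 / 2)
    (hnotint : ¬ ∃ z : ℤ, mt = z)
    (mb : ℤ) (hmb : mb = ⌈mt⌉)
    (θb : ℝ) (hθb : θb = Real.pi / (4 * mb + 2)) :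
    0 < θb ∧ θb ≤ θ ∧ Real.sin ((2 * mb + 1) * θb) ^ 2 = 1 := by
  have hπ := Real.pi_pos
  have hmt0 : 0 < mt := by
    rw [hmt]
    have h1 : 1 / 2 < Real.pi / (4 * θ) := by
      rw [lt_div_iff₀ (by linarith)]
      linarith
    linarith
  have hmb1 : (1 : ℤ) ≤ mb := by
    rw [hmb]
    exact_mod_cast Int.le_ceil_iff.mpr (by simpa using hmt0)
  have hmbR : (1 : ℝ) ≤ (mb : ℝ) := by exact_mod_cast hmb1
  have hden : (0 : ℝ) < 4 * mb + 2 := by linarith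
  have hθb0 : 0 < θb := by rw [hθb]; positivity
  have hle : mt ≤ (mb : ℝ) := by rw [hmb]; exact Int.le_ceil mt
  have hθbθ : θb ≤ θ := by
    have h4 : Real.pi / θ ≤ 4 * mb + 2 := by
      have : Real.pi / θ = 4 * mt + 2 := by
        rw [hmt]; field_simp; ring
      rw [this]; linarith
    have hπθ : (0 : ℝ) < Real.pi / θ := by positivity
    calc θb = Real.pi / (4 * mb + 2) := hθb
      _ ≤ Real.pi / (Real.pi / θ) := by
          apply div_le_div_of_nonneg_left (le_of_lt hπ) hπθ h4
      _ = θ := by field_simp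
  refine ⟨hθb0, hθbθ, ?_⟩
  have harg : ((2 * mb + 1 : ℤ) : ℝ) * θb = Real.pi / 2 := by
    rw [hθb]
    have h2 : (4 * (mb : ℝ) + 2) = 2 * (2 * mb + 1) := by ring
    rw [h2]
    have hne : (2 * (mb : ℝ) + 1) ≠ 0 := by linarith
    push_cast
    field_simp
  have : ((2 * mb + 1 : ℤ) : ℝ) * θb = (2 * (mb : ℝ) + 1) * θb := by push_cast; ring
  rw [← this, harg, Real.sin_pi_div_two, one_pow]
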